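/- Necessary condition of invariance without transforming time: if the functional I[q] = ∫_a^b L(t, q(t), q'(t)) dt satisfies ∫_{t_a}^{t_b} L(t, q, q') dt = ∫_{t_a}^{t_b} L(t, q + ε ξ(t,q) + o(ε), d/dt(q + ε ξ(t,q) + o(ε))) dt for every subinterval [t_a, t_b] ⊆ [a,b] and all ε, then ∂₂L(t,q,q')·ξ(t,q) + ∂₃L(t,q,q')·(d/dt ξ(t,q)) = 0 along q. -/

import Mathlib

open Set

/-- Necessary condition of invariance (no time transformation): if the Lagrangian is
pointwise invariant under `q ↦ q + ε ξ(t,q)`, then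
`∂₂L(t,q,q̇)·ξ + ∂₃L(t,q,q̇)·ξ̇ = 0` along `q`. -/
theorem necessary_condition_of_invariance
    {m : ℕ} (a b : ℝ) (hab : a < b)
    (L : ℝ → EuclideanSpace ℝ (Fin m) → EuclideanSpace ℝ (Fin m) → ℝ)
    (hL : ContDiff ℝ 2 (fun p : ℝ × EuclideanSpace ℝ (Fin m) × EuclideanSpace ℝ (Fin m) =>
      L p.1 p.2.1 p.2.2))
    (q : ℝ → EuclideanSpace ℝ (Fin m)) (hq : ContDiff ℝ 1 q)
    (X : ℝ → EuclideanSpace ℝ (Fin m)) (hX : ContDiff ℝ 1 X)  -- X t = ξ(t, q t)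
    (hinv : ∀ ε : ℝ, ∀ t ∈ Icc a b,
      L t (q t) (deriv q t)
        = L t (q t + ε • X t) (deriv q t + ε • deriv X t)) :
    ∀ t ∈ Icc a b,
      fderiv ℝ (fun y => L t y (deriv q t)) (q t) (X t)
        + fderiv ℝ (fun v => L t (q t) v) (deriv q t) (deriv X t) = 0 := by
  intro t ht
  have hFd : DifferentiableAt ℝ
      (fun p : ℝ × EuclideanSpace ℝ (Fin m) × EuclideanSpace ℝ (Fin m) => L p.1 p.2.1 p.2.2)
      (t, q t, deriv q t) :=
    (hL.differentiable (by norm_num)).differentiableAt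
  have hDF := hFd.hasFDerivAt
  set D := fderiv ℝ
      (fun p : ℝ × EuclideanSpace ℝ (Fin m) × EuclideanSpace ℝ (Fin m) => L p.1 p.2.1 p.2.2)
      (t, q t, deriv q t) with hD
  -- the path ε ↦ (t, q t + ε • X t, deriv q t + ε • deriv X t)
  have hpath : HasDerivAt
      (fun ε : ℝ => ((t, q t + ε • X t, deriv q t + ε • deriv X t) :
        ℝ × EuclideanSpace ℝ (Fin m) × EuclideanSpace ℝ (Fin m)))
      (0, X t, deriv X t) 0 := by
    refine (hasDerivAt_const 0 t).prodMk (HasDerivAt.prodMk ?_ ?_)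
    · simpa using (((hasDerivAt_id (0:ℝ)).smul_const (X t)).const_add (q t))
    · simpa using (((hasDerivAt_id (0:ℝ)).smul_const (deriv X t)).const_add (deriv q t))
  have hDF' : HasFDerivAt
      (fun p : ℝ × EuclideanSpace ℝ (Fin m) × EuclideanSpace ℝ (Fin m) => L p.1 p.2.1 p.2.2)
      D (t, q t + (0:ℝ) • X t, deriv q t + (0:ℝ) • deriv X t) := by
    simpa using hDF
  have hcomp : HasDerivAt (fun ε : ℝ => L t (q t + ε • X t) (deriv q t + ε • deriv X t))
      (D (0, X t, deriv X t)) 0 := by have := hDF'.comp_hasDerivAt 0 hpath; exact this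
  have hconst : (fun ε : ℝ => L t (q t + ε • X t) (deriv q t + ε • deriv X t))
      = fun _ => L t (q t) (deriv q t) := by
    funext ε
    exact (hinv ε t ht).symm
  have hzero : D (0, X t, deriv X t) = 0 := by
    have h0 : HasDerivAt (fun _ : ℝ => L t (q t) (deriv q t)) (D (0, X t, deriv X t)) 0 :=
      hconst ▸ hcomp
    have := h0.deriv
    simpa [deriv_const] using this.symm
  -- partial derivatives via composition with affine insertions
  have hins1 : HasFDerivAt
      (fun y : EuclideanSpace ℝ (Fin m) =>
        ((t, y, deriv q t) : ℝ × EuclideanSpace ℝ (Fin m) × EuclideanSpace ℝ (Fin m)))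
      ((0 : EuclideanSpace ℝ (Fin m) →L[ℝ] ℝ).prod
        ((ContinuousLinearMap.id ℝ (EuclideanSpace ℝ (Fin m))).prod 0)) (q t) :=
    (hasFDerivAt_const t (q t)).prodMk ((hasFDerivAt_id (q t)).prodMk (hasFDerivAt_const (deriv q t) (q t)))
  have hins2 : HasFDerivAt
      (fun v : EuclideanSpace ℝ (Fin m) =>
        ((t, q t, v) : ℝ × EuclideanSpace ℝ (Fin m) × EuclideanSpace ℝ (Fin m)))
      ((0 : EuclideanSpace ℝ (Fin m) →L[ℝ] ℝ).prod
        (((0 : EuclideanSpace ℝ (Fin m) →L[ℝ] EuclideanSpace ℝ (Fin m))).prod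
          (ContinuousLinearMap.id ℝ (EuclideanSpace ℝ (Fin m))))) (deriv q t) :=
    (hasFDerivAt_const t (deriv q t)).prodMk
      ((hasFDerivAt_const (q t) (deriv q t)).prodMk (hasFDerivAt_id (deriv q t)))
  have h1 : HasFDerivAt (fun y : EuclideanSpace ℝ (Fin m) => L t y (deriv q t))
      (D.comp ((0 : EuclideanSpace ℝ (Fin m) →L[ℝ] ℝ).prod
        ((ContinuousLinearMap.id ℝ (EuclideanSpace ℝ (Fin m))).prod 0))) (q t) :=
    by have := hDF.comp (q t) hins1; exact this
  have h2 : HasFDerivAt (fun v : EuclideanSpace ℝ (Fin m) => L t (q t) v)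
      (D.comp ((0 : EuclideanSpace ℝ (Fin m) →L[ℝ] ℝ).prod
        (((0 : EuclideanSpace ℝ (Fin m) →L[ℝ] EuclideanSpace ℝ (Fin m))).prod
          (ContinuousLinearMap.id ℝ (EuclideanSpace ℝ (Fin m)))))) (deriv q t) :=
    by have := hDF.comp (deriv q t) hins2; exact this
  rw [h1.fderiv, h2.fderiv]
  have hsum : D ((0 : ℝ), X t, (0 : EuclideanSpace ℝ (Fin m)))
      + D ((0 : ℝ), (0 : EuclideanSpace ℝ (Fin m)), deriv X t)
      = D (0, X t, deriv X t) := by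
    rw [← ContinuousLinearMap.map_add]
    simp
  simpa [ContinuousLinearMap.comp_apply, ContinuousLinearMap.prod_apply, hzero] using hsum
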